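/- Let n ≥ 1 be a natural number, m ≥ 0 a real number, and M > 1 a real number. Then there exist constants K > 0 and δ > 0 such that for every natural number i and every x ∈ ℝⁿ with |x_j| ≤ π for all j = 1, ..., n, one has |Σ_{q ∈ ℤⁿ} ∫_{M^{-2i}}^{M^{-2(i-1)}} e^{-α(‖q‖² + m²)} e^{i⟨q, x⟩} dα| ≤ K · M^{(n-2)·i} · e^{-δ · M^{-i} · ‖x‖}, where ‖·‖ denotes the Euclidean norm on ℝⁿ and ⟨q, x⟩ the Euclidean inner product. -/

import Mathlib

open MeasureTheory


set_option maxHeartbeats 1000000 in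
lemma tsum_pi_prod {u : ℤ → ℝ} (hu0 : ∀ k, 0 ≤ u k) (hu : Summable u) (n : ℕ) :
    Summable (fun q : Fin n → ℤ => ∏ j, u (q j)) ∧
    ∑' q : Fin n → ℤ, ∏ j, u (q j) = (∑' k, u k) ^ n := by
  induction n with
  | zero =>
    constructor
    · exact Summable.of_finite
    · simp [tsum_eq_single (fun j : Fin 0 => (0:ℤ)) (fun b hb => by
        exact absurd (funext fun j => j.elim0) hb)]
  | succ n ih =>
    have hnorm : Summable fun k => ‖u k‖ :=
      hu.congr fun k => (Real.norm_of_nonneg (hu0 k)).symm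
    have hgnorm : Summable fun q : Fin n → ℤ => ‖∏ j, u (q j)‖ :=
      ih.1.congr fun q =>
        (Real.norm_of_nonneg (Finset.prod_nonneg fun j _ => hu0 _)).symm
    have key : ∀ p : ℤ × (Fin n → ℤ),
        (∏ j, u ((Fin.consEquiv fun _ : Fin (n+1) => ℤ) p j)) = u p.1 * ∏ j, u (p.2 j) := by
      intro p
      simp [Fin.consEquiv, Fin.prod_univ_succ]
    have h1 : (0 : ℤ → ℝ) ≤ u := Pi.le_def.mpr fun k => hu0 k
    have h2 : (0 : (Fin n → ℤ) → ℝ) ≤ fun q : Fin n → ℤ => ∏ j, u (q j) :=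
      Pi.le_def.mpr fun q => Finset.prod_nonneg fun j _ => hu0 _
    have hF : Summable (fun p : ℤ × (Fin n → ℤ) => u p.1 * ∏ j, u (p.2 j)) :=
      Summable.mul_of_nonneg (f := u) (g := fun q : Fin n → ℤ => ∏ j, u (q j)) hu ih.1 h1 h2
    constructor
    · have hc : Summable ((fun q : Fin (n+1) → ℤ => ∏ j, u (q j)) ∘
          (Fin.consEquiv fun _ : Fin (n+1) => ℤ)) := hF.congr fun p => (key p).symm
      exact (Equiv.summable_iff _).mp hc
    · calc ∑' q : Fin (n+1) → ℤ, ∏ j, u (q j)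
          = ∑' p : ℤ × (Fin n → ℤ), ∏ j, u ((Fin.consEquiv fun _ : Fin (n+1) => ℤ) p j) :=
            ((Fin.consEquiv fun _ : Fin (n+1) => ℤ).tsum_eq _).symm
        _ = ∑' p : ℤ × (Fin n → ℤ), u p.1 * ∏ j, u (p.2 j) := tsum_congr key
        _ = (∑' k, u k) * ∑' q : Fin n → ℤ, ∏ j, u (q j) :=
            (tsum_mul_tsum_of_summable_norm hnorm hgnorm).symm
        _ = (∑' k, u k) ^ (n+1) := by rw [ih.2, pow_succ]; ring


lemma tsum_exp_abs (s : ℝ) (hs0 : 0 < s) (hs1 : s ≤ 1) :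
    Summable (fun k : ℤ => Real.exp (-s * |(k : ℝ)|)) ∧
    ∑' k : ℤ, Real.exp (-s * |(k : ℝ)|) ≤ 6 / s := by
  set r := Real.exp (-s) with hr
  have hr0 : 0 < r := Real.exp_pos _
  have hr1 : r < 1 := Real.exp_lt_one_iff.mpr (by linarith)
  have hnat : ∀ n : ℕ, Real.exp (-s * |((n : ℤ) : ℝ)|) = r ^ n := by
    intro n
    rw [hr, ← Real.exp_nat_mul]
    push_cast
    rw [abs_of_nonneg (by positivity)]
    ring_nf
  have hneg : ∀ n : ℕ, Real.exp (-s * |((-(n + 1) : ℤ) : ℝ)|) = r ^ (n + 1) := by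
    intro n
    rw [hr, ← Real.exp_nat_mul]
    push_cast
    rw [abs_of_nonpos (by push_cast; linarith)]
    ring_nf
  have hsum1 : Summable (fun n : ℕ => Real.exp (-s * |((n : ℤ) : ℝ)|)) :=
    (summable_geometric_of_lt_one hr0.le hr1).congr fun n => (hnat n).symm
  have hsum2 : Summable (fun n : ℕ => Real.exp (-s * |((-(n + 1) : ℤ) : ℝ)|)) := by
    refine ((summable_geometric_of_lt_one hr0.le hr1).mul_left r).congr fun n => ?_
    rw [hneg n, pow_succ]; ring
  have hS : Summable (fun k : ℤ => Real.exp (-s * |(k : ℝ)|)) :=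
    Summable.of_nat_of_neg_add_one hsum1 hsum2
  refine ⟨hS, ?_⟩
  rw [tsum_of_nat_of_neg_add_one (f := fun k : ℤ => Real.exp (-s * |(k : ℝ)|)) hsum1 hsum2]
  have e1 : ∑' n : ℕ, Real.exp (-s * |((n : ℤ) : ℝ)|) = (1 - r)⁻¹ := by
    rw [tsum_congr hnat, tsum_geometric_of_lt_one hr0.le hr1]
  have e2 : ∑' n : ℕ, Real.exp (-s * |((-(n + 1) : ℤ) : ℝ)|) = r * (1 - r)⁻¹ := by
    rw [tsum_congr hneg]
    simp_rw [pow_succ, mul_comm (r ^ _) r]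
    rw [tsum_mul_left, tsum_geometric_of_lt_one hr0.le hr1]
  rw [e1, e2]
  have h1 : (1 : ℝ) + s ≤ Real.exp s := by linarith [Real.add_one_le_exp s]
  have h2 : r ≤ (1 + s)⁻¹ := by
    rw [hr, Real.exp_neg]
    exact inv_anti₀ (by linarith) h1
  have hfrac : (1 : ℝ) - (1 + s)⁻¹ = s / (1 + s) := by field_simp; ring
  have hkey : s / 3 ≤ 1 - r := by
    have h3 : s / 3 ≤ s / (1 + s) := div_le_div_of_nonneg_left hs0.le (by linarith) (by linarith)
    linarith [h3, hfrac, h2]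
  have hpos : (0 : ℝ) < 1 - r := lt_of_lt_of_le (by positivity) hkey
  have hinv : (1 - r)⁻¹ ≤ 3 / s := by
    have := inv_anti₀ (by positivity : (0:ℝ) < s / 3) hkey
    rwa [inv_div] at this
  have hterm2 : r * (1 - r)⁻¹ ≤ 3 / s :=
    le_trans (by nlinarith [inv_nonneg.mpr hpos.le]) hinv
  have : (3 : ℝ) / s + 3 / s = 6 / s := by ring
  linarith

set_option maxHeartbeats 2000000 in
/-- Sliced propagator bound for the Laplacian kinetic term on `U(1)^n`: the
slice `C^i` of the Schwinger representation of the propagator, restricted to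
Schwinger parameters `α ∈ [M^{-2i}, M^{-2(i-1)}]`, is bounded by
`K · M^{(n-2)i} · exp(−δ · M^{-i} · ‖x‖)` uniformly in the scale `i` and in
the angle difference `x` with `|x_j| ≤ π`. -/
theorem sliced_propagator_bound
    (n : ℕ) (hn : 1 ≤ n) (m : ℝ) (hm : 0 ≤ m) (M : ℝ) (hM : 1 < M) :
    ∃ K > (0 : ℝ), ∃ δ > (0 : ℝ), ∀ (i : ℕ) (x : Fin n → ℝ),
      (∀ j : Fin n, |x j| ≤ Real.pi) →
      ‖∑' q : Fin n → ℤ,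
          ∫ α in Set.Icc (M ^ (-(2 * (i : ℤ)))) (M ^ (-(2 * ((i : ℤ) - 1)))),
            Complex.exp (-(α : ℂ) * ((∑ j, ((q j : ℂ)) ^ 2) + (m : ℂ) ^ 2))
              * Complex.exp (Complex.I * (∑ j, (q j : ℂ) * (x j : ℂ)))‖
        ≤ K * M ^ (((n : ℤ) - 2) * (i : ℤ))
            * Real.exp (-δ * M ^ (-(i : ℤ)) * Real.sqrt (∑ j, (x j) ^ 2)) := by
  have hM0 : (0 : ℝ) < M := lt_trans one_pos hM
  refine ⟨M ^ (2:ℤ) * (6 * Real.exp 1) ^ n * Real.exp (Real.pi * Real.sqrt n),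
    by positivity, 1, one_pos, ?_⟩
  intro i x hx
  set s : ℝ := M ^ (-(i : ℤ)) with hs
  set a : ℝ := M ^ (-(2 * (i : ℤ))) with hadef
  set b : ℝ := M ^ (-(2 * ((i : ℤ) - 1))) with hbdef
  have hs0 : 0 < s := zpow_pos hM0 _
  have hs1 : s ≤ 1 := by
    rw [hs]
    apply zpow_le_one_of_nonpos₀ hM.le
    simp
  have ha0 : 0 < a := zpow_pos hM0 _
  have hb0 : 0 < b := zpow_pos hM0 _
  have ha : a = s * s := by
    rw [hadef, hs, show -(2 * (i : ℤ)) = -(i:ℤ) + -(i:ℤ) by ring, zpow_add₀ hM0.ne']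
  have hb : b = M ^ (2:ℤ) * a := by
    rw [hbdef, hadef, show -(2 * ((i:ℤ) - 1)) = 2 + -(2 * (i:ℤ)) by ring,
      zpow_add₀ hM0.ne']
  have hab : a ≤ b := by
    have h1 : (1 : ℝ) ≤ M ^ (2:ℤ) := one_le_zpow₀ hM.le (by norm_num)
    calc a = 1 * a := (one_mul a).symm
      _ ≤ M ^ (2:ℤ) * a := mul_le_mul_of_nonneg_right h1 ha0.le
      _ = b := hb.symm
  -- the dominating one-dimensional function
  set u : ℤ → ℝ := fun k => Real.exp (-s * |(k : ℝ)|) with hu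
  have hu0 : ∀ k, 0 ≤ u k := fun k => (Real.exp_pos _).le
  obtain ⟨husum, hT⟩ := tsum_exp_abs s hs0 hs1
  obtain ⟨hgsum, hgtsum⟩ := tsum_pi_prod hu0 husum n
  set T : ℝ := ∑' k, u k with hTdef
  have hT0 : 0 ≤ T := tsum_nonneg hu0
  set g : (Fin n → ℤ) → ℝ := fun q => ∏ j, u (q j) with hg
  have hg0 : ∀ q, 0 ≤ g q := fun q => Finset.prod_nonneg fun j _ => hu0 _
  set E : ℝ := Real.exp 1 ^ n with hE
  -- per-term bound
  set f : (Fin n → ℤ) → ℂ := fun q =>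
    ∫ α in Set.Icc a b,
      Complex.exp (-(α : ℂ) * ((∑ j, ((q j : ℂ)) ^ 2) + (m : ℂ) ^ 2))
        * Complex.exp (Complex.I * (∑ j, (q j : ℂ) * (x j : ℂ))) with hf
  have hbound : ∀ q : Fin n → ℤ, ‖f q‖ ≤ (b * E) * g q := by
    intro q
    set Q : ℝ := ∑ j, ((q j : ℝ)) ^ 2 with hQ
    have hQ0 : 0 ≤ Q := Finset.sum_nonneg fun j _ => sq_nonneg _
    have step1 : ‖f q‖ ≤ Real.exp (-(a * Q)) * (volume (Set.Icc a b)).toReal := by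
      refine norm_setIntegral_le_of_norm_le_const ?_ ?_
      · rw [Real.volume_Icc]; exact ENNReal.ofReal_lt_top
      · intro α hα
        have hz1 : (-(α : ℂ) * ((∑ j, ((q j : ℂ)) ^ 2) + (m : ℂ) ^ 2))
            = ((-(α * (Q + m ^ 2)) : ℝ) : ℂ) := by
          rw [hQ]; push_cast; ring
        have hz2 : (Complex.I * (∑ j, (q j : ℂ) * (x j : ℂ)))
            = Complex.I * (((∑ j, (q j : ℝ) * (x j)) : ℝ) : ℂ) := by
          push_cast; ring
        rw [hz1, hz2, norm_mul,
          Complex.norm_exp, Complex.norm_exp]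
        have hre1 : ((( -(α * (Q + m ^ 2)) : ℝ) : ℂ)).re = -(α * (Q + m ^ 2)) := Complex.ofReal_re _
        have hre2 : (Complex.I * (((∑ j, (q j : ℝ) * (x j)) : ℝ) : ℂ)).re = 0 := by
          simp [Complex.mul_re]
        rw [hre1, hre2, Real.exp_zero, mul_one]
        apply Real.exp_le_exp.mpr
        have hαa : a ≤ α := hα.1
        nlinarith [sq_nonneg m]
    have hvol : (volume (Set.Icc a b)).toReal = b - a := by
      rw [Real.volume_Icc, ENNReal.toReal_ofReal (by linarith)]
    have step2 : Real.exp (-(a * Q)) ≤ E * g q := by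
      have : -(a * Q) = ∑ j, -(a * ((q j : ℝ)) ^ 2) := by
        rw [hQ, Finset.mul_sum, ← Finset.sum_neg_distrib]
      rw [this, Real.exp_sum, hg, hE]
      have hle : ∀ j : Fin n, Real.exp (-(a * ((q j : ℝ)) ^ 2))
          ≤ Real.exp 1 * u (q j) := by
        intro j
        rw [hu, ← Real.exp_add]
        apply Real.exp_le_exp.mpr
        have hv : 0 ≤ s * |((q j : ℤ) : ℝ)| := by positivity
        have hsq : a * ((q j : ℝ)) ^ 2 = (s * |((q j : ℤ) : ℝ)|) ^ 2 := by
          rw [ha, mul_pow, sq_abs]; ring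
        nlinarith [sq_nonneg (s * |((q j : ℤ) : ℝ)| - 1)]
      calc ∏ j, Real.exp (-(a * ((q j : ℝ)) ^ 2))
          ≤ ∏ j, (Real.exp 1 * u (q j)) :=
            Finset.prod_le_prod (fun j _ => (Real.exp_pos _).le) (fun j _ => hle j)
        _ = Real.exp 1 ^ n * ∏ j, u (q j) := by
            rw [Finset.prod_mul_distrib, Finset.prod_const, Finset.card_univ,
              Fintype.card_fin]
    calc ‖f q‖ ≤ Real.exp (-(a * Q)) * (b - a) := by rw [← hvol]; exact step1
      _ ≤ (E * g q) * b := by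
          apply mul_le_mul step2 (by linarith) (by linarith) (by positivity)
      _ = (b * E) * g q := by ring
  have hFsum : Summable (fun q : Fin n → ℤ => ‖f q‖) :=
    Summable.of_nonneg_of_le (fun q => norm_nonneg _) hbound (hgsum.mul_left _)
  have main : ‖∑' q, f q‖ ≤ (b * E) * T ^ n := by
    calc ‖∑' q, f q‖ ≤ ∑' q, ‖f q‖ := norm_tsum_le_tsum_norm hFsum
      _ ≤ ∑' q, (b * E) * g q := Summable.tsum_le_tsum hbound hFsum (hgsum.mul_left _)
      _ = (b * E) * T ^ n := by rw [tsum_mul_left, hgtsum]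
  -- arithmetic on the right-hand side
  have hsn : s ^ n ≠ 0 := by positivity
  have hA : a = M ^ (((n : ℤ) - 2) * (i : ℤ)) * s ^ n := by
    rw [hs, ← zpow_natCast (M ^ (-(i:ℤ))) n, ← zpow_mul, ← zpow_add₀ hM0.ne', hadef]
    congr 1
    ring
  have hTn : T ^ n ≤ (6 / s) ^ n := pow_le_pow_left₀ hT0 hT n
  have hxnorm : Real.sqrt (∑ j, (x j) ^ 2) ≤ Real.pi * Real.sqrt n := by
    have h1 : (∑ j, (x j) ^ 2) ≤ (n : ℝ) * Real.pi ^ 2 := by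
      calc (∑ j, (x j) ^ 2) ≤ ∑ _j : Fin n, Real.pi ^ 2 := by
            apply Finset.sum_le_sum
            intro j _
            calc (x j) ^ 2 = |x j| ^ 2 := (sq_abs _).symm
              _ ≤ Real.pi ^ 2 := pow_le_pow_left₀ (abs_nonneg _) (hx j) 2
        _ = (n : ℝ) * Real.pi ^ 2 := by
            rw [Finset.sum_const, Finset.card_univ, Fintype.card_fin, nsmul_eq_mul]
    calc Real.sqrt (∑ j, (x j) ^ 2) ≤ Real.sqrt ((n : ℝ) * Real.pi ^ 2) :=
          Real.sqrt_le_sqrt h1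
      _ = Real.pi * Real.sqrt n := by
          rw [Real.sqrt_mul (Nat.cast_nonneg n), Real.sqrt_sq Real.pi_pos.le]; ring
  have hexp1 : (1 : ℝ) ≤ Real.exp (Real.pi * Real.sqrt n)
      * Real.exp (-1 * s * Real.sqrt (∑ j, (x j) ^ 2)) := by
    rw [← Real.exp_add]
    apply Real.one_le_exp
    have h2 : s * Real.sqrt (∑ j, (x j) ^ 2) ≤ Real.sqrt (∑ j, (x j) ^ 2) :=
      mul_le_of_le_one_left (Real.sqrt_nonneg _) hs1
    nlinarith [Real.sqrt_nonneg (∑ j, (x j) ^ 2)]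
  have heq : (b * E) * (6 / s) ^ n
      = M ^ (2:ℤ) * (6 * Real.exp 1) ^ n * M ^ (((n : ℤ) - 2) * (i : ℤ)) := by
    rw [hb, hE, hA, div_pow, mul_pow]
    field_simp
  calc ‖∑' q, f q‖ ≤ (b * E) * T ^ n := main
    _ ≤ (b * E) * (6 / s) ^ n := by
        apply mul_le_mul_of_nonneg_left hTn (by positivity)
    _ = M ^ (2:ℤ) * (6 * Real.exp 1) ^ n * M ^ (((n : ℤ) - 2) * (i : ℤ)) := heq
    _ ≤ M ^ (2:ℤ) * (6 * Real.exp 1) ^ n * M ^ (((n : ℤ) - 2) * (i : ℤ))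
        * (Real.exp (Real.pi * Real.sqrt n)
          * Real.exp (-1 * s * Real.sqrt (∑ j, (x j) ^ 2))) := by
        nlinarith [zpow_pos hM0 (((n:ℤ) - 2) * (i:ℤ)), zpow_pos hM0 (2:ℤ),
          pow_pos (by positivity : (0:ℝ) < 6 * Real.exp 1) n,
          mul_pos (mul_pos (zpow_pos hM0 (2:ℤ)) (pow_pos (by positivity : (0:ℝ) < 6 * Real.exp 1) n)) (zpow_pos hM0 (((n:ℤ) - 2) * (i:ℤ)))]
    _ = M ^ (2:ℤ) * (6 * Real.exp 1) ^ n * Real.exp (Real.pi * Real.sqrt n)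
        * M ^ (((n : ℤ) - 2) * (i : ℤ))
        * Real.exp (-1 * s * Real.sqrt (∑ j, (x j) ^ 2)) := by ring
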